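/- Let n ≥ 3 and k ≥ 3 be integers and let t₀ be the largest real root of f_{n,k} (i.e., f_{n,k}(t₀) = 0 and f_{n,k}(t) > 0 for all t > t₀). Then for every real number t > 0, setting S(t) = (n/2)·(1 + √(1 + 4(k−2)t)), the inequality S(t) ≥ n + n³t/(2(n−1)) − (n(n−2)/(2(n−1)))·√(n²t² + 4(n−1)t) holds if and only if t ≤ t₀; moreover equality holds if and only if t = t₀. -/

import Mathlib

/-- The cubic polynomial `f_{n,k}` from Theorem 1.4 of the paper. -/
noncomputable def fnk (n k : ℤ) (t : ℝ) : ℝ :=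
  (n : ℝ) ^ 4 * t ^ 3
    - (n : ℝ) ^ 2 * (((k : ℝ) - 1) * (n : ℝ) ^ 2 - 2 * ((k : ℝ) + 2) * (n : ℝ)
        + 2 * ((k : ℝ) + 2)) * t ^ 2
    - ((n : ℝ) - 1) * (3 * (n : ℝ) - ((k : ℝ) + 2)) * (((k : ℝ) - 1) * (n : ℝ)
        - ((k : ℝ) + 2)) * t
    - ((n : ℝ) - 1) * ((n : ℝ) - 2) ^ 2

/-- The derivative `f'_{n,k}` of the cubic `f_{n,k}`. -/
noncomputable def fnk' (n k : ℤ) (t : ℝ) : ℝ :=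
  3 * (n : ℝ) ^ 4 * t ^ 2
    - 2 * (n : ℝ) ^ 2 * (((k : ℝ) - 1) * (n : ℝ) ^ 2 - 2 * ((k : ℝ) + 2) * (n : ℝ)
        + 2 * ((k : ℝ) + 2)) * t
    - ((n : ℝ) - 1) * (3 * (n : ℝ) - ((k : ℝ) + 2)) * (((k : ℝ) - 1) * (n : ℝ)
        - ((k : ℝ) + 2))

/-- The quantity `t₁ = (n² + 2(n−1)(k−6))/(2n²)`. -/
noncomputable def tOne (n k : ℤ) : ℝ :=
  ((n : ℝ) ^ 2 + 2 * ((n : ℝ) - 1) * ((k : ℝ) - 6)) / (2 * (n : ℝ) ^ 2)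


lemma aux_ring (n k : ℤ) (s : ℝ) :
    (2*((n:ℝ)-1)*s*((((n:ℝ)^2+2*((n:ℝ)-1)*((k:ℝ)-6))) - 2*(n:ℝ)^2*s))^2
      - 4*((n:ℝ)-1)^2*((n:ℝ)-2)^2*(1+4*((k:ℝ)-2)*s)*((n:ℝ)^2*s^2+4*((n:ℝ)-1)*s)
    = 16*((n:ℝ)-1)^2*s*fnk n k s := by
  unfold fnk; ring

lemma euler_ring (n k : ℤ) (t : ℝ) :
    8*(n:ℝ)^2*(t * fnk' n k t - 2 * fnk n k t)
    = (2*(n:ℝ)^2*t)^3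
      + 4*(((n:ℝ)-1)*(3*(n:ℝ)-((k:ℝ)+2))*(((k:ℝ)-1)*(n:ℝ)-((k:ℝ)+2)))*(2*(n:ℝ)^2*t)
      + 16*(n:ℝ)^2*(((n:ℝ)-1)*((n:ℝ)-2)^2) := by
  unfold fnk fnk'; ring

lemma Gv_pos (n k : ℤ) (hn : 3 ≤ n) (hk : 3 ≤ k) (v : ℝ) (hv : 0 < v)
    (nn kk : ℝ) (hnn : nn = (n:ℝ)) (hkk : kk = (k:ℝ))
    (huv : nn^2 + 2*(nn-1)*(kk-6) < v) :
    0 < v^3 + 4*((nn-1)*(3*nn-(kk+2))*((kk-1)*nn-(kk+2)))*v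
        + 16*nn^2*((nn-1)*(nn-2)^2) := by
  set c1 : ℝ := (nn-1)*(3*nn-(kk+2))*((kk-1)*nn-(kk+2)) with hc1
  set c0 : ℝ := (nn-1)*(nn-2)^2 with hc0
  have hn3 : (3:ℝ) ≤ nn := by rw [hnn]; exact_mod_cast hn
  have hk3 : (3:ℝ) ≤ kk := by rw [hkk]; exact_mod_cast hk
  have hc0pos : 0 < c0 := by rw [hc0]; nlinarith
  by_cases hcase0 : k + 2 ≤ 3*n
  · have hcase : kk + 2 ≤ 3*nn := by rw [hnn, hkk]; exact_mod_cast hcase0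
    have hfac : (0:ℝ) < (kk-1)*nn-(kk+2) := by nlinarith
    have hc1nn : 0 ≤ c1 := by
      rw [hc1]
      apply mul_nonneg (mul_nonneg (by linarith) (by linarith)) hfac.le
    nlinarith [pow_pos hv 3, mul_nonneg hc1nn hv.le]
  · push_neg at hcase0
    have hcase : 3*nn - 1 ≤ kk := by
      rw [hnn, hkk]
      have : 3*n - 1 ≤ k := by omega
      exact_mod_cast this
    set u : ℝ := nn^2 + 2*(nn-1)*(kk-6) with hu
    set a : ℝ := nn - 3 with ha
    set b : ℝ := kk - (3*nn - 1) with hb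
    have ha0 : 0 ≤ a := by rw [ha]; linarith
    have hb0 : 0 ≤ b := by rw [hb]; linarith
    have hupos : 0 < u := by rw [hu]; nlinarith
    have hQ1 : 0 ≤ 3*u^2 + 4*c1 := by
      have e : 3*u^2 + 4*c1 = 779 + 304*b^1 + 32*b^2 + 2096*a^1 + 568*(a^1*b^1)
          + 32*(a^1*b^2) + 2090*a^2 + 352*(a^2*b^1) + 8*(a^2*b^2) + 912*a^3 + 72*(a^3*b^1)
          + 147*a^4 := by rw [hu, hc1, ha, hb]; ring
      rw [e]
      repeat' apply add_nonneg
      all_goals first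
        | positivity
        | exact mul_nonneg (by norm_num) (pow_nonneg ha0 _)
        | exact mul_nonneg (by norm_num) (pow_nonneg hb0 _)
        | exact mul_nonneg (by norm_num) (mul_nonneg (pow_nonneg ha0 _) (pow_nonneg hb0 _))
    have hQ2 : 0 ≤ u^3 + 4*c1*u + 16*nn^2*c0 := by
      have e : u^3 + 4*c1*u + 16*nn^2*c0 = 3705 + 1348*b^1 + 128*b^2 + 15534*a^1
          + 4866*(a^1*b^1) + 384*(a^1*b^2) + 26677*a^2 + 6856*(a^2*b^1) + 416*(a^2*b^2)
          + 24052*a^3 + 4716*(a^3*b^1) + 192*(a^3*b^2) + 12027*a^4 + 1588*(a^4*b^1)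
          + 32*(a^4*b^2) + 3166*a^5 + 210*(a^5*b^1) + 343*a^6 := by
        rw [hu, hc1, hc0, ha, hb]; ring
      rw [e]
      repeat' apply add_nonneg
      all_goals first
        | positivity
        | exact mul_nonneg (by norm_num) (pow_nonneg ha0 _)
        | exact mul_nonneg (by norm_num) (pow_nonneg hb0 _)
        | exact mul_nonneg (by norm_num) (mul_nonneg (pow_nonneg ha0 _) (pow_nonneg hb0 _))
    have e2 : v^3 + 4*c1*v + 16*nn^2*c0
        = (u^3 + 4*c1*u + 16*nn^2*c0) + (v-u)*(3*u^2+4*c1) + (v-u)^2*(v+2*u) := by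
      ring
    have h3 : 0 < (v-u)^2*(v+2*u) :=
      mul_pos (pow_pos (sub_pos.mpr huv) 2) (by linarith)
    have h2 : 0 ≤ (v-u)*(3*u^2+4*c1) := mul_nonneg (by linarith) hQ1
    linarith [e2, hQ2, h2, h3]

lemma g_pos (n k : ℤ) (hn : 3 ≤ n) (hk : 3 ≤ k) (t : ℝ)
    (ht : max (tOne n k) 0 < t) :
    0 < t * fnk' n k t - 2 * fnk n k t := by
  have ht0 : 0 < t := lt_of_le_of_lt (le_max_right _ _) ht
  have hnpos : (0:ℝ) < (n:ℝ) := by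
    have : (3:ℝ) ≤ (n:ℝ) := by exact_mod_cast hn
    linarith
  have hv : 0 < 2*(n:ℝ)^2*t := by positivity
  have huv : (n:ℝ)^2 + 2*((n:ℝ)-1)*((k:ℝ)-6) < 2*(n:ℝ)^2*t := by
    have h1 : tOne n k < t := lt_of_le_of_lt (le_max_left _ _) ht
    unfold tOne at h1
    rw [div_lt_iff₀ (by positivity)] at h1
    linarith [h1]
  have key := Gv_pos n k hn hk _ hv _ _ rfl rfl huv
  have e := euler_ring n k t
  by_contra hX
  push_neg at hX
  have h8 : (0:ℝ) < 8*(n:ℝ)^2 := by positivity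
  nlinarith [mul_nonneg h8.le (neg_nonneg.mpr hX), e, key]

lemma hasDerivAt_fnk (n k : ℤ) (x : ℝ) : HasDerivAt (fnk n k) (fnk' n k x) x := by
  have h1 : HasDerivAt (fun t:ℝ => t^3) (3*x^2) x := by simpa using hasDerivAt_pow 3 x
  have h2 : HasDerivAt (fun t:ℝ => t^2) (2*x) x := by simpa using hasDerivAt_pow 2 x
  have h3 : HasDerivAt (fun t:ℝ => t) 1 x := hasDerivAt_id x
  have h := (((h1.const_mul ((n:ℝ)^4)).sub (h2.const_mul
      ((n:ℝ)^2 * (((k:ℝ)-1)*(n:ℝ)^2 - 2*((k:ℝ)+2)*(n:ℝ) + 2*((k:ℝ)+2))))).sub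
      (h3.const_mul (((n:ℝ)-1)*(3*(n:ℝ)-((k:ℝ)+2))*(((k:ℝ)-1)*(n:ℝ)-((k:ℝ)+2))))).sub_const
      (((n:ℝ)-1)*((n:ℝ)-2)^2)
  refine h.congr_deriv ?_
  unfold fnk'; ring

lemma fnk_strictMonoOn (n k : ℤ) (hn : 3 ≤ n) (hk : 3 ≤ k) :
    StrictMonoOn (fun t => fnk n k t / t^2) (Set.Ioi (max (tOne n k) 0)) := by
  apply strictMonoOn_of_deriv_pos (convex_Ioi _)
  · apply ContinuousOn.div
    · exact (by unfold fnk; fun_prop : Continuous (fnk n k)).continuousOn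
    · exact (continuous_pow 2).continuousOn
    · intro x hx
      have : 0 < x := lt_of_le_of_lt (le_max_right _ _) hx
      positivity
  · intro x hx
    rw [interior_Ioi] at hx
    have hx0 : 0 < x := lt_of_le_of_lt (le_max_right _ _) hx
    have hf : HasDerivAt (fnk n k) (fnk' n k x) x := hasDerivAt_fnk n k x
    have hg : HasDerivAt (fun t:ℝ => t^2) (2*x) x := by simpa using hasDerivAt_pow 2 x
    have hd : HasDerivAt (fun t => fnk n k t / t^2) _ x := hf.div hg (by positivity)
    rw [hd.deriv]
    apply div_pos ?_ (by positivity)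
    have hgp := g_pos n k hn hk x hx
    nlinarith [mul_pos hx0 hgp]

lemma sign_pos_of_mul {X Y Z : ℝ} (h : X*Y = Z) (hY : Y < 0) (hZ : Z < 0) : 0 < X := by
  by_contra hX
  push_neg at hX
  nlinarith [mul_nonneg (neg_nonneg.mpr hX) (neg_nonneg.mpr hY.le)]

lemma sign_neg_of_mul {X Y Z : ℝ} (h : X*Y = Z) (hY : Y < 0) (hZ : 0 < Z) : X < 0 := by
  by_contra hX
  push_neg at hX
  nlinarith [mul_nonneg hX (neg_nonneg.mpr hY.le)]

lemma sq_cmp_lt {L R : ℝ} (hL : 0 < L) (hR : 0 < R) (h : 0 < L^2 - R^2) : R < L := by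
  nlinarith

lemma sq_cmp_gt {L R : ℝ} (hL : 0 < L) (hR : 0 < R) (h : L^2 - R^2 < 0) : L < R := by
  nlinarith

lemma sq_cmp_eq {L R : ℝ} (hL : 0 < L) (hR : 0 < R) (h : L^2 - R^2 = 0) : L = R := by
  apply le_antisymm <;> nlinarith

set_option maxHeartbeats 1000000 in
/-- Let `t₀` be the largest real root of `f_{n,k}` (`n, k ≥ 3`). For every
`t > 0`, setting `S(t) = (n/2)(1 + √(1 + 4(k−2)t))`, the inequality
`S(t) ≥ n + n³t/(2(n−1)) − (n(n−2)/(2(n−1)))√(n²t² + 4(n−1)t)` holds iff `t ≤ t₀`,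
with equality iff `t = t₀`. -/
theorem S_ge_rigidity_threshold_iff (n k : ℤ) (hn : 3 ≤ n) (hk : 3 ≤ k)
    (t₀ : ℝ) (ht₀ : fnk n k t₀ = 0) (ht₀max : ∀ t : ℝ, t₀ < t → 0 < fnk n k t) :
    ∀ t : ℝ, 0 < t →
      (((n : ℝ) / 2 * (1 + Real.sqrt (1 + 4 * ((k : ℝ) - 2) * t))
          ≥ (n : ℝ) + (n : ℝ) ^ 3 * t / (2 * ((n : ℝ) - 1))
            - ((n : ℝ) * ((n : ℝ) - 2) / (2 * ((n : ℝ) - 1)))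
              * Real.sqrt ((n : ℝ) ^ 2 * t ^ 2 + 4 * ((n : ℝ) - 1) * t)) ↔ t ≤ t₀) ∧
      (((n : ℝ) / 2 * (1 + Real.sqrt (1 + 4 * ((k : ℝ) - 2) * t))
          = (n : ℝ) + (n : ℝ) ^ 3 * t / (2 * ((n : ℝ) - 1))
            - ((n : ℝ) * ((n : ℝ) - 2) / (2 * ((n : ℝ) - 1)))
              * Real.sqrt ((n : ℝ) ^ 2 * t ^ 2 + 4 * ((n : ℝ) - 1) * t)) ↔ t = t₀) := by
  have hn3 : (3:ℝ) ≤ (n:ℝ) := by exact_mod_cast hn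
  have hk3 : (3:ℝ) ≤ (k:ℝ) := by exact_mod_cast hk
  have hcont : Continuous (fnk n k) := by unfold fnk; fun_prop
  -- t₀ is positive
  have hfnk0 : fnk n k 0 < 0 := by
    have e : fnk n k 0 = -(((n:ℝ)-1)*((n:ℝ)-2)^2) := by unfold fnk; ring
    rw [e]; nlinarith
  have ht₀pos : 0 < t₀ := by
    have hev : ∀ᶠ x in nhds (0:ℝ), fnk n k x < 0 :=
      (hcont.tendsto 0).eventually_lt_const hfnk0
    rcases Metric.eventually_nhds_iff.mp hev with ⟨ε, hε, hball⟩
    have hneg : fnk n k (ε/2) < 0 := by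
      apply hball
      rw [Real.dist_eq, sub_zero, abs_of_pos (by linarith)]
      linarith
    by_contra hle
    push_neg at hle
    exact absurd (ht₀max (ε/2) (lt_of_le_of_lt hle (by linarith))) (by linarith)
  -- tOne < t₀
  have htOne_lt : tOne n k < t₀ := by
    rcases le_or_gt (tOne n k) 0 with h | h
    · linarith
    · have haux := aux_ring n k (tOne n k)
      have hz : 2*((n:ℝ)-1)*(tOne n k)*((((n:ℝ)^2+2*((n:ℝ)-1)*((k:ℝ)-6)))
          - 2*(n:ℝ)^2*(tOne n k)) = 0 := by
        unfold tOne; field_simp; ring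
      rw [hz] at haux
      have hA2pos : (0:ℝ) < 1+4*((k:ℝ)-2)*(tOne n k) := by nlinarith
      have hB2pos : (0:ℝ) < (n:ℝ)^2*(tOne n k)^2+4*((n:ℝ)-1)*(tOne n k) := by nlinarith
      have hneg : fnk n k (tOne n k) < 0 := by
        by_contra hge
        push_neg at hge
        have h1 : 0 ≤ 16*((n:ℝ)-1)^2*(tOne n k)*fnk n k (tOne n k) := by
          apply mul_nonneg _ hge
          positivity
        have h2 : 0 < 4*((n:ℝ)-1)^2*((n:ℝ)-2)^2*(1+4*((k:ℝ)-2)*(tOne n k))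
            *((n:ℝ)^2*(tOne n k)^2+4*((n:ℝ)-1)*(tOne n k)) := by
          apply mul_pos (mul_pos _ hA2pos) hB2pos
          nlinarith
        nlinarith [haux]
      rcases lt_trichotomy (tOne n k) t₀ with h' | h' | h'
      · exact h'
      · rw [h', ht₀] at hneg; norm_num at hneg
      · exact absurd (ht₀max _ h') (by linarith)
  have hmax_lt : max (tOne n k) 0 < t₀ := max_lt htOne_lt ht₀pos
  -- sign of fnk on (max tOne 0, t₀)
  have hsign : ∀ s : ℝ, max (tOne n k) 0 < s → s < t₀ → fnk n k s < 0 := by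
    intro s hs hst
    have hmono := fnk_strictMonoOn n k hn hk (Set.mem_Ioi.mpr hs)
      (Set.mem_Ioi.mpr hmax_lt) hst
    simp only [ht₀, zero_div] at hmono
    have hs0 : 0 < s := lt_of_le_of_lt (le_max_right _ _) hs
    rcases div_neg_iff.mp hmono with ⟨_, h2⟩ | ⟨h1, _⟩
    · nlinarith
    · exact h1
  intro t ht
  have hsq : (0:ℝ) < ((n:ℝ)-1)^2 := by nlinarith
  have h16 : (0:ℝ) < 16*((n:ℝ)-1)^2*t := mul_pos (mul_pos (by norm_num) hsq) ht
  set A := Real.sqrt (1 + 4 * ((k : ℝ) - 2) * t) with hA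
  set B := Real.sqrt ((n : ℝ) ^ 2 * t ^ 2 + 4 * ((n : ℝ) - 1) * t) with hB
  have hA2 : A^2 = 1 + 4 * ((k : ℝ) - 2) * t := Real.sq_sqrt (by nlinarith)
  have hB2 : B^2 = (n : ℝ) ^ 2 * t ^ 2 + 4 * ((n : ℝ) - 1) * t := Real.sq_sqrt (by nlinarith)
  have hApos : 0 < A := Real.sqrt_pos.mpr (by nlinarith)
  have hBpos : 0 < B := Real.sqrt_pos.mpr (by nlinarith)
  set L : ℝ := ((n:ℝ)-1)*A + ((n:ℝ)-2)*B with hL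
  set R : ℝ := ((n:ℝ)-1) + (n:ℝ)^2*t with hR
  have hLpos : 0 < L := by
    apply add_pos (mul_pos (by linarith) hApos) (mul_pos (by linarith) hBpos)
  have hRpos : 0 < R := by rw [hR]; nlinarith
  have hc : 0 < (n:ℝ)/(2*((n:ℝ)-1)) := div_pos (by linarith) (by linarith)
  have key0 : (n : ℝ) / 2 * (1 + A)
      - ((n : ℝ) + (n : ℝ) ^ 3 * t / (2 * ((n : ℝ) - 1))
        - ((n : ℝ) * ((n : ℝ) - 2) / (2 * ((n : ℝ) - 1))) * B)
      = ((n:ℝ)/(2*((n:ℝ)-1)))*(L-R) := by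
    have h2n : (2:ℝ)*((n:ℝ)-1) ≠ 0 := by nlinarith
    have h1n : ((n:ℝ)-1) ≠ 0 := by nlinarith
    rw [hL, hR]
    field_simp
    ring
  have hiff1 : ((n : ℝ) / 2 * (1 + A)
      ≥ (n : ℝ) + (n : ℝ) ^ 3 * t / (2 * ((n : ℝ) - 1))
        - ((n : ℝ) * ((n : ℝ) - 2) / (2 * ((n : ℝ) - 1))) * B) ↔ R ≤ L := by
    rw [ge_iff_le, ← sub_nonneg, key0]
    constructor
    · intro h
      by_contra h2
      push_neg at h2
      have := mul_pos hc (sub_pos.mpr h2)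
      nlinarith
    · intro h
      exact mul_nonneg hc.le (by linarith)
  have hiff2 : ((n : ℝ) / 2 * (1 + A)
      = (n : ℝ) + (n : ℝ) ^ 3 * t / (2 * ((n : ℝ) - 1))
        - ((n : ℝ) * ((n : ℝ) - 2) / (2 * ((n : ℝ) - 1))) * B) ↔ L = R := by
    rw [← sub_eq_zero, key0]
    constructor
    · intro h
      rcases mul_eq_zero.mp h with h' | h'
      · exact absurd h' (ne_of_gt hc)
      · linarith [sub_eq_zero.mp h']
    · intro h
      rw [h]; ring
  have hLR2 : L^2 - R^2 = 2*((n:ℝ)-1)*t*((((n:ℝ)^2+2*((n:ℝ)-1)*((k:ℝ)-6)))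
      - 2*(n:ℝ)^2*t) + 2*((n:ℝ)-1)*((n:ℝ)-2)*(A*B) := by
    have e : L^2 = ((n:ℝ)-1)^2*A^2 + 2*((n:ℝ)-1)*((n:ℝ)-2)*(A*B) + ((n:ℝ)-2)^2*B^2 := by
      rw [hL]; ring
    rw [e, hA2, hB2, hR]; ring
  have hprod : (L^2-R^2)*(2*((n:ℝ)-1)*t*((((n:ℝ)^2+2*((n:ℝ)-1)*((k:ℝ)-6)))
      - 2*(n:ℝ)^2*t) - 2*((n:ℝ)-1)*((n:ℝ)-2)*(A*B))
      = 16*((n:ℝ)-1)^2*t*fnk n k t := by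
    rw [hLR2]
    have e2 : (2*((n:ℝ)-1)*t*((((n:ℝ)^2+2*((n:ℝ)-1)*((k:ℝ)-6))) - 2*(n:ℝ)^2*t)
          + 2*((n:ℝ)-1)*((n:ℝ)-2)*(A*B))
        * (2*((n:ℝ)-1)*t*((((n:ℝ)^2+2*((n:ℝ)-1)*((k:ℝ)-6))) - 2*(n:ℝ)^2*t)
          - 2*((n:ℝ)-1)*((n:ℝ)-2)*(A*B))
        = (2*((n:ℝ)-1)*t*((((n:ℝ)^2+2*((n:ℝ)-1)*((k:ℝ)-6))) - 2*(n:ℝ)^2*t))^2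
          - 4*((n:ℝ)-1)^2*((n:ℝ)-2)^2*(A^2*B^2) := by ring
    rw [e2, hA2, hB2]
    linear_combination aux_ring n k t
  rcases le_or_gt t (max (tOne n k) 0) with hcase | hcase
  · -- 0 < t ≤ tOne
    have htone : t ≤ tOne n k := by
      rcases le_total (tOne n k) 0 with h | h
      · rw [max_eq_right h] at hcase; linarith
      · rwa [max_eq_left h] at hcase
    have hD : 0 ≤ (((n:ℝ)^2+2*((n:ℝ)-1)*((k:ℝ)-6))) - 2*(n:ℝ)^2*t := by
      unfold tOne at htone
      rw [le_div_iff₀ (by positivity)] at htone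
      linarith
    have hL2R2 : 0 < L^2 - R^2 := by
      rw [hLR2]
      have h1 : 0 ≤ 2*((n:ℝ)-1)*t*((((n:ℝ)^2+2*((n:ℝ)-1)*((k:ℝ)-6))) - 2*(n:ℝ)^2*t) :=
        mul_nonneg (by nlinarith) hD
      have h2 : 0 < 2*((n:ℝ)-1)*((n:ℝ)-2)*(A*B) := by
        apply mul_pos (by nlinarith) (mul_pos hApos hBpos)
      linarith
    have hLgtR : R < L := sq_cmp_lt hLpos hRpos hL2R2
    have htlt : t < t₀ := lt_of_le_of_lt htone htOne_lt
    constructor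
    · exact ⟨fun _ => htlt.le, fun _ => hiff1.mpr hLgtR.le⟩
    · constructor
      · intro h; exact absurd (hiff2.mp h) (ne_of_gt hLgtR)
      · intro h; exact absurd h (ne_of_lt htlt)
  · -- t > max tOne 0
    have ht1 : tOne n k < t := lt_of_le_of_lt (le_max_left _ _) hcase
    have hD : (((n:ℝ)^2+2*((n:ℝ)-1)*((k:ℝ)-6))) - 2*(n:ℝ)^2*t < 0 := by
      unfold tOne at ht1
      rw [div_lt_iff₀ (by positivity)] at ht1
      linarith
    have hDm : 2*((n:ℝ)-1)*t*((((n:ℝ)^2+2*((n:ℝ)-1)*((k:ℝ)-6))) - 2*(n:ℝ)^2*t)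
        - 2*((n:ℝ)-1)*((n:ℝ)-2)*(A*B) < 0 := by
      have h1 : 2*((n:ℝ)-1)*t*((((n:ℝ)^2+2*((n:ℝ)-1)*((k:ℝ)-6))) - 2*(n:ℝ)^2*t) < 0 :=
        mul_neg_of_pos_of_neg (mul_pos (by linarith : (0:ℝ) < 2*((n:ℝ)-1)) ht) hD
      have h2 : 0 < 2*((n:ℝ)-1)*((n:ℝ)-2)*(A*B) := by
        apply mul_pos (by nlinarith) (mul_pos hApos hBpos)
      linarith
    rcases lt_trichotomy t t₀ with h | h | h
    · have hf : fnk n k t < 0 := hsign t hcase h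
      have hrhs : 16*((n:ℝ)-1)^2*t*fnk n k t < 0 :=
        mul_neg_of_pos_of_neg h16 hf
      have hL2R2 : 0 < L^2 - R^2 := sign_pos_of_mul hprod hDm hrhs
      have hLgtR : R < L := sq_cmp_lt hLpos hRpos hL2R2
      constructor
      · exact ⟨fun _ => h.le, fun _ => hiff1.mpr hLgtR.le⟩
      · constructor
        · intro h'; exact absurd (hiff2.mp h') (ne_of_gt hLgtR)
        · intro h'; exact absurd h' (ne_of_lt h)
    · have hf0 : fnk n k t = 0 := by rw [h]; exact ht₀
      have hz : L^2 - R^2 = 0 := by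
        rw [hf0] at hprod
        simp only [mul_zero] at hprod
        rcases mul_eq_zero.mp hprod with h' | h'
        · exact h'
        · exact absurd h' (ne_of_lt hDm)
      have hLR : L = R := sq_cmp_eq hLpos hRpos hz
      constructor
      · exact ⟨fun _ => h.le, fun _ => hiff1.mpr hLR.ge⟩
      · exact ⟨fun _ => h, fun _ => hiff2.mpr hLR⟩
    · have hf : 0 < fnk n k t := ht₀max t h
      have hrhs : 0 < 16*((n:ℝ)-1)^2*t*fnk n k t := mul_pos h16 hf
      have hL2R2 : L^2 - R^2 < 0 := sign_neg_of_mul hprod hDm hrhs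
      have hLltR : L < R := sq_cmp_gt hLpos hRpos hL2R2
      constructor
      · constructor
        · intro h'; exact absurd (hiff1.mp h') (not_le.mpr hLltR)
        · intro h'; exact absurd h' (not_le.mpr h)
      · constructor
        · intro h'; exact absurd (hiff2.mp h') (ne_of_lt hLltR)
        · intro h'; exact absurd h' (ne_of_gt h)
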